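/- Let (A, I) → (B, J) be a map of prisms. Then the natural map I ⊗_A B → J is an isomorphism (rigidity of maps of prisms). In particular, if I = (d) is principal with d a distinguished element, then J is generated by the image of d. -/

import Mathlib

open MvPolynomial

/-- The integral polynomial `(X₀^p + X₁^p - (X₀+X₁)^p)/p`, written explicitly using
binomial coefficients (each `p.choose k` for `0 < k < p` is divisible by `p`). -/
noncomputable def deltaAddPoly (p : ℕ) : MvPolynomial (Fin 2) ℤ :=
  - ∑ k ∈ Finset.Ioo 0 p, MvPolynomial.C ((p.choose k / p : ℕ) : ℤ) * X 0 ^ k * X 1 ^ (p - k)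

/-- A δ-ring structure (for the prime `p`) on a commutative ring `A`. -/
structure DeltaRing (p : ℕ) (A : Type*) [CommRing A] where
  δ : A → A
  delta_zero : δ 0 = 0
  delta_one : δ 1 = 0
  delta_mul : ∀ x y : A, δ (x * y) = x ^ p * δ y + y ^ p * δ x + (p : A) * δ x * δ y
  delta_add : ∀ x y : A, δ (x + y) = δ x + δ y + MvPolynomial.aeval ![x, y] (deltaAddPoly p)


open scoped TensorProduct

/-- Classical (discrete) notion of a prism `(A, I)`: `A` is a δ-ring, `I` is an
invertible ideal (here: principal, generated by a nonzerodivisor), `A` is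
(p, I)-adically complete, and `p ∈ I + φ(I)A`. -/
def IsPrism (p : ℕ) {A : Type*} [CommRing A] (D : DeltaRing p A) (I : Ideal A) : Prop :=
  (∃ d : A, d ∈ nonZeroDivisors A ∧ I = Ideal.span {d}) ∧
  IsAdicComplete (I ⊔ Ideal.span {(p : A)}) A ∧
  (p : A) ∈ I ⊔ Ideal.span ((fun x : A => x ^ p + (p : A) * D.δ x) '' (I : Set A))

/- ### Auxiliary lemmas -/

lemma key_identity {p : ℕ} [Fact p.Prime] {R : Type*} [CommRing R] (x y : R) :
    (p : R) * (-∑ k ∈ Finset.Ioo 0 p, ((p.choose k / p : ℕ) : R) * x ^ k * y ^ (p - k)) =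
      x ^ p + y ^ p - (x + y) ^ p := by
  have hp : p.Prime := Fact.out
  have h2 : 2 ≤ p := hp.two_le
  have hsplit : Finset.range (p + 1) = insert 0 (insert p (Finset.Ioo 0 p)) := by
    ext a
    simp only [Finset.mem_range, Finset.mem_insert, Finset.mem_Ioo]
    omega
  have hadd := add_pow x y p
  rw [hsplit, Finset.sum_insert (by simp only [Finset.mem_insert, Finset.mem_Ioo]; omega),
    Finset.sum_insert (by simp [Finset.mem_Ioo])] at hadd
  simp only [pow_zero, Nat.sub_zero, Nat.sub_self, Nat.choose_self, Nat.choose_zero_right,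
    Nat.cast_one, one_mul, mul_one] at hadd
  have hsum : (p : R) * ∑ k ∈ Finset.Ioo 0 p, ((p.choose k / p : ℕ) : R) * x ^ k * y ^ (p - k)
      = ∑ k ∈ Finset.Ioo 0 p, x ^ k * y ^ (p - k) * (p.choose k : R) := by
    rw [Finset.mul_sum]
    refine Finset.sum_congr rfl fun k hk => ?_
    obtain ⟨hk1, hk2⟩ := Finset.mem_Ioo.mp hk
    have hd : p * (p.choose k / p) = p.choose k :=
      Nat.mul_div_cancel' (hp.dvd_choose_self (by omega) hk2)
    have hc : ((p : ℕ) : R) * ((p.choose k / p : ℕ) : R) = ((p.choose k : ℕ) : R) := by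
      rw [← Nat.cast_mul, hd]
    linear_combination (x ^ k * y ^ (p - k)) * hc
  rw [mul_neg, hsum]
  linear_combination hadd

lemma aeval_deltaAddPoly {p : ℕ} {R : Type*} [CommRing R] (x y : R) :
    aeval ![x, y] (deltaAddPoly p) =
      -∑ k ∈ Finset.Ioo 0 p, ((p.choose k / p : ℕ) : R) * x ^ k * y ^ (p - k) := by
  simp only [deltaAddPoly, map_neg, map_sum, map_mul, map_pow, aeval_C, aeval_X,
    Matrix.cons_val_zero, Matrix.cons_val_one, Matrix.head_cons, algebraMap_int_eq,
    eq_intCast, Int.cast_natCast, map_intCast, map_natCast]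

/-- The universal value of `δ` on natural numbers, as an integer. -/
noncomputable def zdelta (p : ℕ) : ℕ → ℤ
  | 0 => 0
  | n + 1 => zdelta p n +
      (-∑ k ∈ Finset.Ioo 0 p, ((p.choose k / p : ℕ) : ℤ) * (n : ℤ) ^ k * (1 : ℤ) ^ (p - k))

lemma zdelta_mul {p : ℕ} [Fact p.Prime] (n : ℕ) :
    (p : ℤ) * zdelta p n = (n : ℤ) - (n : ℤ) ^ p := by
  have hp : p.Prime := Fact.out
  induction n with
  | zero => simp [zdelta, zero_pow hp.pos.ne']
  | succ n ih =>
    rw [zdelta, mul_add, ih, key_identity (n : ℤ) 1]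
    push_cast
    ring

lemma zdelta_p {p : ℕ} [Fact p.Prime] : zdelta p p = 1 - (p : ℤ) ^ (p - 1) := by
  have hp : p.Prime := Fact.out
  have h := zdelta_mul (p := p) p
  have hpow : (p : ℤ) ^ p = (p : ℤ) * (p : ℤ) ^ (p - 1) := by
    rw [← pow_succ', Nat.sub_add_cancel hp.one_lt.le]
  have h2 : (p : ℤ) * zdelta p p = (p : ℤ) * (1 - (p : ℤ) ^ (p - 1)) := by
    rw [h]; linear_combination -hpow
  exact mul_left_cancel₀ (by exact_mod_cast hp.ne_zero) h2

lemma delta_natCast {p : ℕ} [Fact p.Prime] {A : Type*} [CommRing A] (D : DeltaRing p A)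
    (n : ℕ) : D.δ (n : A) = ((zdelta p n : ℤ) : A) := by
  induction n with
  | zero => simpa [zdelta] using D.delta_zero
  | succ n ih =>
    have : ((n + 1 : ℕ) : A) = (n : A) + 1 := by push_cast; ring
    rw [this, D.delta_add, D.delta_one, aeval_deltaAddPoly, ih, zdelta]
    simp only [Int.cast_add, Int.cast_neg, Int.cast_sum, Int.cast_mul, Int.cast_pow,
      Int.cast_natCast, Int.cast_one, add_zero]

lemma delta_p {p : ℕ} [Fact p.Prime] {A : Type*} [CommRing A] (D : DeltaRing p A) :
    D.δ ((p : A)) = 1 - (p : A) ^ (p - 1) := by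
  rw [delta_natCast, zdelta_p]
  push_cast
  ring

/-- An element `1 - j` with `j` in the Jacobson radical is a unit. -/
lemma isUnit_one_sub_jac {A : Type*} [CommRing A] {j : A}
    (hj : j ∈ Ideal.jacobson (⊥ : Ideal A)) : IsUnit (1 - j) := by
  have := (Ideal.mem_jacobson_bot.mp hj) (-1)
  simpa [sub_eq_neg_add] using this

/-- BS Lemma 2.24: a generator `d` with `p ∈ (d, φ(d))` and `p, d` in the Jacobson
radical is distinguished, i.e. `δ(d)` is a unit. -/
lemma isUnit_delta {p : ℕ} [Fact p.Prime] {A : Type*} [CommRing A] (D : DeltaRing p A)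
    {d : A} (hjp : (p : A) ∈ Ideal.jacobson (⊥ : Ideal A))
    (hjd : d ∈ Ideal.jacobson (⊥ : Ideal A))
    (hrep : ∃ a b : A, a * d + b * (d ^ p + (p : A) * D.δ d) = (p : A)) :
    IsUnit (D.δ d) := by
  have hp : p.Prime := Fact.out
  have h2 : 2 ≤ p := hp.two_le
  obtain ⟨a, b, hab⟩ := hrep
  set w : A := 1 - b * D.δ d with hw
  set c : A := a + b * d ^ (p - 1) with hc
  have hdp : d ^ p = d ^ (p - 1) * d := by
    rw [← pow_succ, Nat.sub_add_cancel hp.one_lt.le]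
  have hE : (p : A) * w = c * d := by
    rw [hw, hc]
    linear_combination -hab + b * hdp
  have hδE : D.δ ((p : A) * w) = D.δ (c * d) := by rw [hE]
  rw [D.delta_mul, D.delta_mul, delta_p] at hδE
  obtain ⟨s, hws⟩ : D.δ d ∣ w ^ p - 1 := by
    have h1 : (w - 1) ∣ w ^ p - 1 ^ p := sub_dvd_pow_sub_pow w 1 p
    rw [one_pow] at h1
    refine dvd_trans ?_ h1
    exact ⟨-b, by rw [hw]; ring⟩
  have hq1 : (p : A) ^ (p - 1) = (p : A) * (p : A) ^ (p - 2) := by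
    rw [← pow_succ', show p - 2 + 1 = p - 1 by omega]
  have hq2 : (p : A) ^ p = (p : A) * (p : A) ^ (p - 1) := by
    rw [← pow_succ', Nat.sub_add_cancel hp.one_lt.le]
  set α : A := -D.δ w + w ^ p * (p : A) ^ (p - 2) with hα
  set β : A := d ^ (p - 1) * D.δ c with hβ
  set γ : A := c ^ p + (p : A) * D.δ c - s with hγ
  have hone : (1 : A) = (p : A) * α + d * β + D.δ d * γ := by
    rw [hα, hβ, hγ]
    linear_combination hδE - hws - D.δ w * hq2 + w ^ p * hq1 + D.δ c * hdp
  have hjsum : (p : A) * α + d * β ∈ Ideal.jacobson (⊥ : Ideal A) :=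
    Ideal.add_mem _ (Ideal.mul_mem_right _ _ hjp) (Ideal.mul_mem_right _ _ hjd)
  have hunit : IsUnit (D.δ d * γ) := by
    have h3 : D.δ d * γ = 1 - ((p : A) * α + d * β) := by linear_combination -hone
    rw [h3]
    exact isUnit_one_sub_jac hjsum
  exact isUnit_of_mul_isUnit_left hunit

/-- Extract a representation `p = a d + b φ(d)` from the prism condition. -/
lemma exists_rep {p : ℕ} {A : Type*} [CommRing A] (D : DeltaRing p A) {I : Ideal A} {d : A}
    (hI : I = Ideal.span {d})
    (hmem : (p : A) ∈ I ⊔ Ideal.span ((fun x : A => x ^ p + (p : A) * D.δ x) '' (I : Set A))) :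
    ∃ a b : A, a * d + b * (d ^ p + (p : A) * D.δ d) = (p : A) := by
  have hle : I ⊔ Ideal.span ((fun x : A => x ^ p + (p : A) * D.δ x) '' (I : Set A)) ≤
      Ideal.span {d, d ^ p + (p : A) * D.δ d} := by
    apply sup_le
    · rw [hI]
      exact Ideal.span_mono (Set.singleton_subset_iff.mpr (Set.mem_insert _ _))
    · rw [Ideal.span_le]
      rintro y ⟨x, hx, rfl⟩
      have hx' : x ∈ I := hx
      rw [hI, Ideal.mem_span_singleton] at hx'
      obtain ⟨r, rfl⟩ := hx'
      have hmul : (fun x : A => x ^ p + (p : A) * D.δ x) (d * r)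
          = (r ^ p + (p : A) * D.δ r) * (d ^ p + (p : A) * D.δ d) := by
        simp only
        rw [D.delta_mul]
        ring
      rw [hmul]
      exact Ideal.mul_mem_left _ _
        (Ideal.subset_span (Set.mem_insert_of_mem _ rfl))
  exact Ideal.mem_span_pair.mp (hle hmem)

lemma span_eq_of_unit {B : Type*} [CommRing B] {x y u : B} (hu : IsUnit u) (h : x = y * u) :
    Ideal.span {x} = Ideal.span {y} := by
  obtain ⟨u, rfl⟩ := hu
  apply le_antisymm
  · exact Ideal.span_singleton_le_span_singleton.mpr ⟨u, h⟩
  · exact Ideal.span_singleton_le_span_singleton.mpr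
      ⟨↑u⁻¹, by rw [h, mul_assoc, Units.mul_inv, mul_one]⟩

/-- rigidity of maps of prisms. -/
theorem prism_rigidity {p : ℕ} [Fact p.Prime] {A B : Type*} [CommRing A] [CommRing B]
    [Algebra A B] (DA : DeltaRing p A) (DB : DeltaRing p B)
    (I : Ideal A) (J : Ideal B)
    (hA : IsPrism p DA I) (hB : IsPrism p DB J)
    (hδ : ∀ a : A, algebraMap A B (DA.δ a) = DB.δ (algebraMap A B a))
    (hIJ : I.map (algebraMap A B) ≤ J) :
    (∀ g : I ⊗[A] B →ₗ[A] B,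
      (∀ (x : I) (b : B), g (x ⊗ₜ[A] b) = algebraMap A B x * b) →
      Function.Injective g ∧ LinearMap.range g = J.restrictScalars A) ∧
    (∀ d : A, IsUnit (DA.δ d) → I = Ideal.span {d} →
      J = Ideal.span {algebraMap A B d}) := by
  have hp : p.Prime := Fact.out
  obtain ⟨⟨d₀, hd₀nzd, hI⟩, hAc, hAm⟩ := hA
  obtain ⟨⟨e, henzd, hJ⟩, hBc, hBm⟩ := hB
  have hd₀I : d₀ ∈ I := by rw [hI]; exact Ideal.mem_span_singleton_self d₀
  have heJ : e ∈ J := by rw [hJ]; exact Ideal.mem_span_singleton_self e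
  haveI := hAc
  haveI := hBc
  have hjacA : I ⊔ Ideal.span {(p : A)} ≤ Ideal.jacobson (⊥ : Ideal A) :=
    IsAdicComplete.le_jacobson_bot _
  have hjacB : J ⊔ Ideal.span {(p : B)} ≤ Ideal.jacobson (⊥ : Ideal B) :=
    IsAdicComplete.le_jacobson_bot _
  have hjpA : (p : A) ∈ Ideal.jacobson (⊥ : Ideal A) :=
    hjacA (Submodule.mem_sup_right (Ideal.mem_span_singleton_self _))
  have hjd₀ : d₀ ∈ Ideal.jacobson (⊥ : Ideal A) := hjacA (Submodule.mem_sup_left hd₀I)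
  have hjpB : (p : B) ∈ Ideal.jacobson (⊥ : Ideal B) :=
    hjacB (Submodule.mem_sup_right (Ideal.mem_span_singleton_self _))
  have hje : e ∈ Ideal.jacobson (⊥ : Ideal B) := hjacB (Submodule.mem_sup_left heJ)
  have hd₀δ : IsUnit (DA.δ d₀) := isUnit_delta DA hjpA hjd₀ (exists_rep DA hI hAm)
  have heδ : IsUnit (DB.δ e) := isUnit_delta DB hjpB hje (exists_rep DB hJ hBm)
  set d₀' : B := algebraMap A B d₀ with hd₀'
  have hd₀'J : d₀' ∈ J := hIJ (Ideal.mem_map_of_mem _ hd₀I)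
  obtain ⟨u, hu⟩ : e ∣ d₀' := Ideal.mem_span_singleton.mp (by rw [← hJ]; exact hd₀'J)
  have hδd₀' : IsUnit (DB.δ d₀') := by
    rw [hd₀', ← hδ]
    exact hd₀δ.map (algebraMap A B)
  -- u is a unit
  have huu : IsUnit u := by
    have hmul : DB.δ (e * u) = e ^ p * DB.δ u + u ^ p * DB.δ e + (p : B) * DB.δ e * DB.δ u :=
      DB.delta_mul e u
    rw [← hu] at hmul
    obtain ⟨dv, hdv⟩ := hδd₀'
    have hep : e ^ p = e * e ^ (p - 1) := by
      rw [← pow_succ', Nat.sub_add_cancel hp.one_lt.le]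
    have hv1 : (dv : B) * ↑dv⁻¹ = 1 := dv.mul_inv
    have hkey : u ^ p * (DB.δ e * ↑dv⁻¹) =
        1 - (e * (e ^ (p - 1) * DB.δ u * ↑dv⁻¹) + (p : B) * (DB.δ e * DB.δ u * ↑dv⁻¹)) := by
      linear_combination -(↑dv⁻¹ : B) * hmul + hv1 - (↑dv⁻¹ : B) * hdv
        - (↑dv⁻¹ : B) * DB.δ u * hep
    have hun : IsUnit (u ^ p * (DB.δ e * ↑dv⁻¹)) := by
      rw [hkey]
      exact isUnit_one_sub_jac (Ideal.add_mem _ (Ideal.mul_mem_right _ _ hje)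
        (Ideal.mul_mem_right _ _ hjpB))
    have hup : IsUnit (u ^ p) := isUnit_of_mul_isUnit_left hun
    exact (isUnit_pow_iff hp.pos.ne').mp hup
  have hJd₀' : J = Ideal.span {d₀'} := by
    rw [hJ]
    exact (span_eq_of_unit huu hu).symm
  -- cancellation by d₀'
  have hd₀'cancel : ∀ b1 b2 : B, d₀' * b1 = d₀' * b2 → b1 = b2 := by
    intro b1 b2 hb
    rw [hu] at hb
    have h0 : (b1 - b2) * u * e = 0 := by linear_combination hb
    have h1 : (b1 - b2) * u = 0 := (mem_nonZeroDivisors_iff.mp henzd).2 _ h0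
    have h2 : b1 - b2 = 0 := huu.mul_right_cancel (by rw [h1, zero_mul])
    exact sub_eq_zero.mp h2
  -- the element d₀ of I
  have hd₀mem : d₀ ∈ I := hd₀I
  set dd : I := ⟨d₀, hd₀mem⟩ with hdd
  -- the auxiliary linear map B →ₗ[A] I ⊗ B
  let h : B →ₗ[A] (I ⊗[A] B) :=
    { toFun := fun b => dd ⊗ₜ[A] b
      map_add' := fun b1 b2 => TensorProduct.tmul_add dd b1 b2
      map_smul' := fun a b => by simp [TensorProduct.tmul_smul] }
  have hsurj : ∀ t : I ⊗[A] B, ∃ b : B, h b = t := by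
    intro t
    induction t using TensorProduct.induction_on with
    | zero => exact ⟨0, map_zero h⟩
    | tmul x b =>
      obtain ⟨r, hr⟩ : d₀ ∣ (x : A) :=
        Ideal.mem_span_singleton.mp (by rw [← hI]; exact x.2)
      refine ⟨r • b, ?_⟩
      have hxd : r • dd = x := Subtype.ext (by simp [hdd, hr, smul_eq_mul, mul_comm])
      calc h (r • b) = dd ⊗ₜ[A] (r • b) := rfl
        _ = (r • dd) ⊗ₜ[A] b := (TensorProduct.smul_tmul r dd b).symm
        _ = x ⊗ₜ[A] b := by rw [hxd]
    | add t1 t2 ih1 ih2 =>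
      obtain ⟨b1, hb1⟩ := ih1
      obtain ⟨b2, hb2⟩ := ih2
      exact ⟨b1 + b2, by rw [map_add, hb1, hb2]⟩
  constructor
  · intro g hg
    have hgh : ∀ b : B, g (h b) = d₀' * b := fun b => hg dd b
    constructor
    · intro t1 t2 ht
      obtain ⟨b1, rfl⟩ := hsurj t1
      obtain ⟨b2, rfl⟩ := hsurj t2
      have hbb : d₀' * b1 = d₀' * b2 := by rw [← hgh, ← hgh, ht]
      rw [hd₀'cancel b1 b2 hbb]
    · apply le_antisymm
      · rintro x ⟨t, rfl⟩
        obtain ⟨b, rfl⟩ := hsurj t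
        show g (h b) ∈ J
        rw [hgh]
        exact Ideal.mul_mem_right _ _ hd₀'J
      · intro x hx
        have hx' : x ∈ Ideal.span {d₀'} := by rw [← hJd₀']; exact hx
        obtain ⟨b, rfl⟩ := Ideal.mem_span_singleton.mp hx'
        exact ⟨h b, hgh b⟩
  · intro d _ hId
    obtain ⟨v, hv⟩ : d₀ ∣ d :=
      Ideal.mem_span_singleton.mp (by rw [← hI, hId]; exact Ideal.mem_span_singleton_self d)
    obtain ⟨w', hw'⟩ : d ∣ d₀ :=
      Ideal.mem_span_singleton.mp (by rw [← hId, hI]; exact Ideal.mem_span_singleton_self d₀)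
    have h0 : (v * w' - 1) * d₀ = 0 := by
      rw [hv] at hw'
      linear_combination -hw'
    have h1 : v * w' - 1 = 0 := (mem_nonZeroDivisors_iff.mp hd₀nzd).2 _ h0
    have hvu : IsUnit v := isUnit_iff_exists_inv.mpr ⟨w', by linear_combination h1⟩
    have hmap : algebraMap A B d = d₀' * algebraMap A B v := by
      rw [hv, map_mul]
    rw [hJd₀']
    exact (span_eq_of_unit (hvu.map (algebraMap A B)) hmap).symm
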